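/- Let S be the 4×4 upper-triangular integer matrix with rows (1,2,−1,−3), (0,1,1,−1), (0,0,1,2), (0,0,0,1), let η be the 4×4 matrix with rows (0,0,0,1),(0,1,1,0),(0,1,0,0),(1,0,0,0) [the Poincaré pairing of 𝔽₁ with k=1], let μ = diag(−1,0,0,1), and let R be the 4×4 nilpotent matrix with rows (0,0,0,0),(2,0,0,0),(1,0,0,0),(0,3,2,0). Then with C the explicit central connection matrix of 𝔽₁ given by C = [[1/(2π), −1/(2π), 1/(2π), −1/(2π)], [γ/π, −γ/π, i+γ/π, −i−γ/π], [(−i+γ/π)/2, −(γ+iπ)/(2π), (−i+γ/π)/2, −(γ+iπ)/(2π)], [γ(−i+2γ/π), γ(−i−2γ/π), 2γ(γ+iπ)/π, −2(γ+iπ)²/π]], the identity S = C^{−1} exp(−πiR) exp(−πiμ) η^{−1} (C^T)^{−1} holds. -/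

import Mathlib

open Complex Matrix

set_option maxHeartbeats 1000000

section Aux

lemma exp_of_cube_eq_zero (A : Matrix (Fin 4) (Fin 4) ℂ) (h : A ^ 3 = 0) :
    NormedSpace.exp A = 1 + A + (2 : ℂ)⁻¹ • A ^ 2 := by
  rw [NormedSpace.exp_eq_tsum (𝕂 := ℂ)]
  have hzero : ∀ n ∉ Finset.range 3, ((n.factorial : ℂ)⁻¹ • A ^ n) = 0 := by
    intro n hn
    have h3 : 3 ≤ n := by simpa using hn
    have : A ^ n = 0 := by
      have : A ^ n = A ^ 3 * A ^ (n - 3) := by rw [← pow_add]; congr 1; omega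
      rw [this, h, zero_mul]
    simp [this]
  beta_reduce
  rw [tsum_eq_sum hzero]
  norm_num [Finset.sum_range_succ, Nat.factorial]

lemma mul_fin_four {α : Type*} [NonUnitalNonAssocSemiring α]
    (a11 a12 a13 a14 a21 a22 a23 a24 a31 a32 a33 a34 a41 a42 a43 a44
     b11 b12 b13 b14 b21 b22 b23 b24 b31 b32 b33 b34 b41 b42 b43 b44 : α) :
    (!![a11, a12, a13, a14; a21, a22, a23, a24; a31, a32, a33, a34;
        a41, a42, a43, a44] : Matrix (Fin 4) (Fin 4) α) *
      !![b11, b12, b13, b14; b21, b22, b23, b24; b31, b32, b33, b34;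
         b41, b42, b43, b44] =
    !![a11 * b11 + a12 * b21 + a13 * b31 + a14 * b41,
       a11 * b12 + a12 * b22 + a13 * b32 + a14 * b42,
       a11 * b13 + a12 * b23 + a13 * b33 + a14 * b43,
       a11 * b14 + a12 * b24 + a13 * b34 + a14 * b44;
       a21 * b11 + a22 * b21 + a23 * b31 + a24 * b41,
       a21 * b12 + a22 * b22 + a23 * b32 + a24 * b42,
       a21 * b13 + a22 * b23 + a23 * b33 + a24 * b43,
       a21 * b14 + a22 * b24 + a23 * b34 + a24 * b44;
       a31 * b11 + a32 * b21 + a33 * b31 + a34 * b41,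
       a31 * b12 + a32 * b22 + a33 * b32 + a34 * b42,
       a31 * b13 + a32 * b23 + a33 * b33 + a34 * b43,
       a31 * b14 + a32 * b24 + a33 * b34 + a34 * b44;
       a41 * b11 + a42 * b21 + a43 * b31 + a44 * b41,
       a41 * b12 + a42 * b22 + a43 * b32 + a44 * b42,
       a41 * b13 + a42 * b23 + a43 * b33 + a44 * b43,
       a41 * b14 + a42 * b24 + a43 * b34 + a44 * b44] := by
  ext i j
  fin_cases i <;> fin_cases j <;>
    simp [Matrix.mul_apply, Fin.sum_univ_four, Matrix.vecHead, Matrix.vecTail]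

lemma smul_fin_four
    (a11 a12 a13 a14 a21 a22 a23 a24 a31 a32 a33 a34 a41 a42 a43 a44 c : ℂ) :
    c • (!![a11, a12, a13, a14; a21, a22, a23, a24; a31, a32, a33, a34;
        a41, a42, a43, a44] : Matrix (Fin 4) (Fin 4) ℂ) =
    !![c * a11, c * a12, c * a13, c * a14; c * a21, c * a22, c * a23, c * a24;
       c * a31, c * a32, c * a33, c * a34; c * a41, c * a42, c * a43, c * a44] := by
  ext i j
  fin_cases i <;> fin_cases j <;>
    simp [Matrix.smul_apply, smul_eq_mul, Matrix.vecHead, Matrix.vecTail]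

lemma transpose_fin_four {α : Type*}
    (a11 a12 a13 a14 a21 a22 a23 a24 a31 a32 a33 a34 a41 a42 a43 a44 : α) :
    (!![a11, a12, a13, a14; a21, a22, a23, a24; a31, a32, a33, a34;
        a41, a42, a43, a44] : Matrix (Fin 4) (Fin 4) α)ᵀ =
    !![a11, a21, a31, a41; a12, a22, a32, a42; a13, a23, a33, a43;
       a14, a24, a34, a44] := by
  ext i j
  fin_cases i <;> fin_cases j <;> rfl

lemma eq_fin_four {α : Type*}
    (a11 a12 a13 a14 a21 a22 a23 a24 a31 a32 a33 a34 a41 a42 a43 a44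
     b11 b12 b13 b14 b21 b22 b23 b24 b31 b32 b33 b34 b41 b42 b43 b44 : α)
    (h11 : a11 = b11) (h12 : a12 = b12) (h13 : a13 = b13) (h14 : a14 = b14)
    (h21 : a21 = b21) (h22 : a22 = b22) (h23 : a23 = b23) (h24 : a24 = b24)
    (h31 : a31 = b31) (h32 : a32 = b32) (h33 : a33 = b33) (h34 : a34 = b34)
    (h41 : a41 = b41) (h42 : a42 = b42) (h43 : a43 = b43) (h44 : a44 = b44) :
    (!![a11, a12, a13, a14; a21, a22, a23, a24; a31, a32, a33, a34;
        a41, a42, a43, a44] : Matrix (Fin 4) (Fin 4) α) =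
    !![b11, b12, b13, b14; b21, b22, b23, b24; b31, b32, b33, b34;
       b41, b42, b43, b44] := by
  ext i j
  fin_cases i <;> fin_cases j <;> assumption

lemma det_fin_four' {α : Type*} [CommRing α]
    (a11 a12 a13 a14 a21 a22 a23 a24 a31 a32 a33 a34 a41 a42 a43 a44 : α) :
    (!![a11, a12, a13, a14; a21, a22, a23, a24; a31, a32, a33, a34;
        a41, a42, a43, a44] : Matrix (Fin 4) (Fin 4) α).det =
      a11 * (a22 * (a33 * a44 - a34 * a43) - a23 * (a32 * a44 - a34 * a42)
          + a24 * (a32 * a43 - a33 * a42))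
      - a12 * (a21 * (a33 * a44 - a34 * a43) - a23 * (a31 * a44 - a34 * a41)
          + a24 * (a31 * a43 - a33 * a41))
      + a13 * (a21 * (a32 * a44 - a34 * a42) - a22 * (a31 * a44 - a34 * a41)
          + a24 * (a31 * a42 - a32 * a41))
      - a14 * (a21 * (a32 * a43 - a33 * a42) - a22 * (a31 * a43 - a33 * a41)
          + a23 * (a31 * a42 - a32 * a41)) := by
  rw [Matrix.det_succ_row_zero]
  simp [Fin.sum_univ_succ, Matrix.det_fin_three, Fin.succAbove, Matrix.submatrix_apply,
    Matrix.vecHead, Matrix.vecTail, Fin.castSucc, Fin.castAdd, Fin.castLE, Fin.succ,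
    Matrix.cons_val_two, Matrix.cons_val_three, Matrix.tail_cons]
  ring

end Aux

/-- The monodromy-data constraint `S = C⁻¹ e^{−πiR} e^{−πiμ} η⁻¹ (Cᵀ)⁻¹` verified
for the computed monodromy data of the Hirzebruch surface `𝔽₁`, where `S` is the
Stokes matrix, `η` the Poincaré pairing, `μ = diag(−1,0,0,1)` the grading matrix,
`R` the matrix of cup product with `c₁(𝔽₁)`, and `C` the explicit central
connection matrix.  The identity holds with the Euler–Mascheroni constant
treated as an indeterminate, i.e. for every `γ : ℂ`. -/
theorem F1_monodromy_data_constraint (γ : ℂ) :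
    (!![1, 2, -1, -3; 0, 1, 1, -1; 0, 0, 1, 2; 0, 0, 0, 1] :
        Matrix (Fin 4) (Fin 4) ℂ) =
      (!![1 / (2 * (Real.pi : ℂ)), -(1 / (2 * (Real.pi : ℂ))),
            1 / (2 * (Real.pi : ℂ)), -(1 / (2 * (Real.pi : ℂ)));
          γ / (Real.pi : ℂ), -(γ / (Real.pi : ℂ)),
            I + γ / (Real.pi : ℂ), -I - γ / (Real.pi : ℂ);
          (-I + γ / (Real.pi : ℂ)) / 2,
            -((γ + I * (Real.pi : ℂ)) / (2 * (Real.pi : ℂ))),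
            (-I + γ / (Real.pi : ℂ)) / 2,
            -((γ + I * (Real.pi : ℂ)) / (2 * (Real.pi : ℂ)));
          γ * (-I + 2 * γ / (Real.pi : ℂ)), γ * (-I - 2 * γ / (Real.pi : ℂ)),
            2 * γ * (γ + I * (Real.pi : ℂ)) / (Real.pi : ℂ),
            -(2 * (γ + I * (Real.pi : ℂ)) ^ 2 / (Real.pi : ℂ))] :
          Matrix (Fin 4) (Fin 4) ℂ)⁻¹ *
        NormedSpace.exp
          ((-((Real.pi : ℂ) * I)) •
            (!![0, 0, 0, 0; 2, 0, 0, 0; 1, 0, 0, 0; 0, 3, 2, 0] :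
              Matrix (Fin 4) (Fin 4) ℂ)) *
        NormedSpace.exp
          ((-((Real.pi : ℂ) * I)) •
            (!![-1, 0, 0, 0; 0, 0, 0, 0; 0, 0, 0, 0; 0, 0, 0, 1] :
              Matrix (Fin 4) (Fin 4) ℂ)) *
        (!![0, 0, 0, 1; 0, 1, 1, 0; 0, 1, 0, 0; 1, 0, 0, 0] :
            Matrix (Fin 4) (Fin 4) ℂ)⁻¹ *
        ((!![1 / (2 * (Real.pi : ℂ)), -(1 / (2 * (Real.pi : ℂ))),
              1 / (2 * (Real.pi : ℂ)), -(1 / (2 * (Real.pi : ℂ)));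
            γ / (Real.pi : ℂ), -(γ / (Real.pi : ℂ)),
              I + γ / (Real.pi : ℂ), -I - γ / (Real.pi : ℂ);
            (-I + γ / (Real.pi : ℂ)) / 2,
              -((γ + I * (Real.pi : ℂ)) / (2 * (Real.pi : ℂ))),
              (-I + γ / (Real.pi : ℂ)) / 2,
              -((γ + I * (Real.pi : ℂ)) / (2 * (Real.pi : ℂ)));
            γ * (-I + 2 * γ / (Real.pi : ℂ)), γ * (-I - 2 * γ / (Real.pi : ℂ)),
              2 * γ * (γ + I * (Real.pi : ℂ)) / (Real.pi : ℂ),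
              -(2 * (γ + I * (Real.pi : ℂ)) ^ 2 / (Real.pi : ℂ))] :
            Matrix (Fin 4) (Fin 4) ℂ)ᵀ)⁻¹ := by
  have hπ : (Real.pi : ℂ) ≠ 0 := Complex.ofReal_ne_zero.mpr Real.pi_ne_zero
  set π : ℂ := (Real.pi : ℂ) with hπdef
  set c : ℂ := (2 * π)⁻¹ with hc
  set C : Matrix (Fin 4) (Fin 4) ℂ :=
    !![1 / (2 * π), -(1 / (2 * π)), 1 / (2 * π), -(1 / (2 * π));
       γ / π, -(γ / π), I + γ / π, -I - γ / π;
       (-I + γ / π) / 2, -((γ + I * π) / (2 * π)), (-I + γ / π) / 2,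
         -((γ + I * π) / (2 * π));
       γ * (-I + 2 * γ / π), γ * (-I - 2 * γ / π), 2 * γ * (γ + I * π) / π,
         -(2 * (γ + I * π) ^ 2 / π)] with hC
  set S : Matrix (Fin 4) (Fin 4) ℂ :=
    !![1, 2, -1, -3; 0, 1, 1, -1; 0, 0, 1, 2; 0, 0, 0, 1] with hS
  set η : Matrix (Fin 4) (Fin 4) ℂ :=
    !![0, 0, 0, 1; 0, 1, 1, 0; 0, 1, 0, 0; 1, 0, 0, 0] with hη
  set P : Matrix (Fin 4) (Fin 4) ℂ :=
    !![1, -1, 1, -1;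
       2*γ, -(2*γ), 2*π*I + 2*γ, -(2*π*I) - 2*γ;
       γ - π*I, -(γ + π*I), γ - π*I, -(γ + π*I);
       4*γ^2 - 2*π*I*γ, -(4*γ^2) - 2*π*I*γ, 4*γ^2 + 4*π*I*γ,
         -(4*(γ + I*π)^2)] with hP
  have h2π : (2 * π) ≠ 0 := by
    simp [hπ]
  have hI2 : (I : ℂ) ^ 2 = -1 := Complex.I_sq
  have hI3 : (I : ℂ) ^ 3 = -I := by rw [pow_succ, hI2]; ring
  have hI4 : (I : ℂ) ^ 4 = 1 := by
    rw [show (4 : ℕ) = 2 + 2 from rfl, pow_add, hI2]; ring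
  have hexp1 : Complex.exp (π * I) = -1 := by
    rw [hπdef]; exact Complex.exp_pi_mul_I
  clear_value π
  -- C is the rescaled polynomial matrix P
  have hCP2 : (2 * π) • C = P := by
    rw [hC, hP, smul_fin_four]
    apply eq_fin_four <;> (field_simp; try ring)
  have hCP : C = c • P := by
    rw [← hCP2, hc, smul_smul, inv_mul_cancel₀ h2π, one_smul]
  -- exp of the nilpotent part
  have hA : ((-(π * I)) •
      (!![0, 0, 0, 0; 2, 0, 0, 0; 1, 0, 0, 0; 0, 3, 2, 0] :
        Matrix (Fin 4) (Fin 4) ℂ)) =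
      !![0, 0, 0, 0; -(2*π*I), 0, 0, 0; -(π*I), 0, 0, 0;
         0, -(3*π*I), -(2*π*I), 0] := by
    rw [smul_fin_four]
    apply eq_fin_four <;> ring
  have hA2 : (!![0, 0, 0, 0; -(2*π*I), 0, 0, 0; -(π*I), 0, 0, 0;
      0, -(3*π*I), -(2*π*I), 0] : Matrix (Fin 4) (Fin 4) ℂ) ^ 2 =
      !![0, 0, 0, 0; 0, 0, 0, 0; 0, 0, 0, 0; -(8*π^2), 0, 0, 0] := by
    rw [pow_two, mul_fin_four]
    apply eq_fin_four <;> (ring_nf; try simp only [Complex.I_sq]; try ring)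
  have hA3 : ((-(π * I)) •
      (!![0, 0, 0, 0; 2, 0, 0, 0; 1, 0, 0, 0; 0, 3, 2, 0] :
        Matrix (Fin 4) (Fin 4) ℂ)) ^ 3 = 0 := by
    rw [pow_succ, hA, hA2, mul_fin_four]
    ext i j
    fin_cases i <;> fin_cases j <;>
      simp [Matrix.vecHead, Matrix.vecTail]
  have hER : NormedSpace.exp ((-(π * I)) •
      (!![0, 0, 0, 0; 2, 0, 0, 0; 1, 0, 0, 0; 0, 3, 2, 0] :
        Matrix (Fin 4) (Fin 4) ℂ)) =
      !![1, 0, 0, 0; -(2 * π * I), 1, 0, 0; -(π * I), 0, 1, 0;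
         -(4 * π ^ 2), -(3 * π * I), -(2 * π * I), 1] := by
    rw [exp_of_cube_eq_zero _ hA3, hA, hA2, smul_fin_four]
    ext i j
    fin_cases i <;> fin_cases j <;>
      (simp [Matrix.one_apply, Matrix.vecHead, Matrix.vecTail]; try ring)
  -- exp of the diagonal part
  have hdiag : Matrix.diagonal ![π * I, 0, 0, -(π * I)] =
      !![π * I, 0, 0, 0; 0, 0, 0, 0; 0, 0, 0, 0; 0, 0, 0, -(π * I)] := by
    ext i j
    fin_cases i <;> fin_cases j <;>
      simp [Matrix.diagonal, Matrix.vecHead, Matrix.vecTail]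
  have hmu : ((-(π * I)) •
      (!![-1, 0, 0, 0; 0, 0, 0, 0; 0, 0, 0, 0; 0, 0, 0, 1] :
        Matrix (Fin 4) (Fin 4) ℂ)) =
      Matrix.diagonal ![π * I, 0, 0, -(π * I)] := by
    rw [smul_fin_four, hdiag]
    apply eq_fin_four <;> ring
  have hEmu : NormedSpace.exp ((-(π * I)) •
      (!![-1, 0, 0, 0; 0, 0, 0, 0; 0, 0, 0, 0; 0, 0, 0, 1] :
        Matrix (Fin 4) (Fin 4) ℂ)) =
      !![-1, 0, 0, 0; 0, 1, 0, 0; 0, 0, 1, 0; 0, 0, 0, -1] := by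
    rw [hmu, Matrix.exp_diagonal]
    have h1 : Complex.exp (π * I) = -1 := hexp1
    have h2 : Complex.exp (-(π * I)) = -1 := by
      rw [Complex.exp_neg, h1]; norm_num
    ext i j
    fin_cases i <;> fin_cases j <;>
      simp [Matrix.diagonal, ← Complex.exp_eq_exp_ℂ, h1, h2,
        Matrix.vecHead, Matrix.vecTail]
  -- inverse of η
  have hηinv : η⁻¹ =
      !![0, 0, 0, 1; 0, 0, 1, 0; 0, 1, -1, 0; 1, 0, 0, 0] := by
    apply Matrix.inv_eq_right_inv
    rw [hη, mul_fin_four]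
    ext i j
    fin_cases i <;> fin_cases j <;>
      simp [Matrix.one_apply, Matrix.vecHead, Matrix.vecTail]
  -- determinant of C
  have hdP : P.det = -(16 * π ^ 4) := by
    rw [hP, det_fin_four']
    ring_nf
    simp only [hI2, hI3, hI4]
    ring
  have hdet : C.det = -1 := by
    rw [hCP, Matrix.det_smul, hdP, hc]
    simp only [Fintype.card_fin]
    field_simp
    ring
  have hu : IsUnit C.det := by rw [hdet]; exact isUnit_one.neg
  have hut : IsUnit (Cᵀ).det := by rwa [Matrix.det_transpose]
  -- the key polynomial identity
  have keyP : P * S *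
      !![(1:ℂ), 2*γ, γ - π*I, 4*γ^2 - 2*π*I*γ;
         -1, -(2*γ), -(γ + π*I), -(4*γ^2) - 2*π*I*γ;
         1, 2*π*I + 2*γ, γ - π*I, 4*γ^2 + 4*π*I*γ;
         -1, -(2*π*I) - 2*γ, -(γ + π*I), -(4*(γ + I*π)^2)] =
      !![0, 0, 0, -(4*π^2); 0, 0, 4*π^2, 8*π^3*I; 0, 4*π^2, -(4*π^2), 4*π^3*I;
         -(4*π^2), -(8*π^3*I), -(4*π^3*I), 16*π^4] := by
    rw [hP, hS, mul_fin_four, mul_fin_four]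
    apply eq_fin_four <;> (ring_nf; try simp only [hI2, hI3, hI4]; try ring_nf; try ring)
  have hPT : Pᵀ =
      !![(1:ℂ), 2*γ, γ - π*I, 4*γ^2 - 2*π*I*γ;
         -1, -(2*γ), -(γ + π*I), -(4*γ^2) - 2*π*I*γ;
         1, 2*π*I + 2*γ, γ - π*I, 4*γ^2 + 4*π*I*γ;
         -1, -(2*π*I) - 2*γ, -(γ + π*I), -(4*(γ + I*π)^2)] := by
    rw [hP, transpose_fin_four]
  have key : C * S * Cᵀ =
      !![1, 0, 0, 0; -(2 * π * I), 1, 0, 0; -(π * I), 0, 1, 0;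
         -(4 * π ^ 2), -(3 * π * I), -(2 * π * I), 1] *
      !![-1, 0, 0, 0; 0, 1, 0, 0; 0, 0, 1, 0; 0, 0, 0, -1] *
      !![0, 0, 0, 1; 0, 0, 1, 0; 0, 1, -1, 0; 1, 0, 0, 0] := by
    rw [hCP, Matrix.transpose_smul, hPT, Matrix.smul_mul, Matrix.smul_mul,
      Matrix.mul_smul, keyP, smul_smul, smul_fin_four, mul_fin_four, mul_fin_four]
    apply eq_fin_four <;>
      (simp only [hc]; field_simp; try ring)
  rw [hER, hEmu, hηinv]
  have hCi : C⁻¹ * C = 1 := Matrix.nonsing_inv_mul C hu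
  have hCt : Cᵀ * (Cᵀ)⁻¹ = 1 := Matrix.mul_nonsing_inv Cᵀ hut
  calc S = C⁻¹ * C * S * (Cᵀ * (Cᵀ)⁻¹) := by rw [hCi, hCt]; simp
    _ = C⁻¹ * (C * S * Cᵀ) * (Cᵀ)⁻¹ := by simp only [Matrix.mul_assoc]
    _ = C⁻¹ * (!![1, 0, 0, 0; -(2 * π * I), 1, 0, 0; -(π * I), 0, 1, 0;
          -(4 * π ^ 2), -(3 * π * I), -(2 * π * I), 1] *
        !![-1, 0, 0, 0; 0, 1, 0, 0; 0, 0, 1, 0; 0, 0, 0, -1] *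
        !![0, 0, 0, 1; 0, 0, 1, 0; 0, 1, -1, 0; 1, 0, 0, 0]) * (Cᵀ)⁻¹ := by
        rw [key]
    _ = C⁻¹ * !![1, 0, 0, 0; -(2 * π * I), 1, 0, 0; -(π * I), 0, 1, 0;
          -(4 * π ^ 2), -(3 * π * I), -(2 * π * I), 1] *
        !![-1, 0, 0, 0; 0, 1, 0, 0; 0, 0, 1, 0; 0, 0, 0, -1] *
        !![0, 0, 0, 1; 0, 0, 1, 0; 0, 1, -1, 0; 1, 0, 0, 0] * (Cᵀ)⁻¹ := by
        simp only [Matrix.mul_assoc]
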